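/- Let H be a complex Hilbert space and let P, Q : H → H be continuous linear projections (P ∘ P = P, Q ∘ Q = Q) with operator norm ‖P − Q‖ < 1. Then the image P(range Q) is dense in the range of P. -/

import Mathlib

/-- If `P` and `Q` are continuous linear projections on a complex Hilbert space `H`
with `‖P - Q‖ < 1`, then `P(range Q)` is dense in the range of `P`. -/
theorem stmt3 {H : Type*} [NormedAddCommGroup H] [InnerProductSpace ℂ H] [CompleteSpace H]
    (P Q : H →L[ℂ] H) (hP : P.comp P = P) (hQ : Q.comp Q = Q) (hPQ : ‖P - Q‖ < 1) :
    (LinearMap.range (P : H →ₗ[ℂ] H) : Set H) ⊆ closure (P '' (LinearMap.range (Q : H →ₗ[ℂ] H) : Set H)) := by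
  -- the submodule M = P(range Q)
  set M : Submodule ℂ H := (LinearMap.range (Q : H →ₗ[ℂ] H)).map (P : H →ₗ[ℂ] H) with hM
  have hMcoe : (P '' (LinearMap.range (Q : H →ₗ[ℂ] H) : Set H)) = (M : Set H) := by
    simp [hM, Submodule.map_coe]
  set K := M.topologicalClosure with hK
  -- range P is closed: it equals ker (1 - P)
  have hrange_ker : LinearMap.range (P : H →ₗ[ℂ] H) = LinearMap.ker (((1 : H →L[ℂ] H) - P : H →L[ℂ] H) : H →ₗ[ℂ] H) := by
    ext x
    constructor
    · rintro ⟨y, rfl⟩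
      have := congrArg (fun T : H →L[ℂ] H => T y) hP
      simp only [ContinuousLinearMap.comp_apply] at this
      simp [LinearMap.mem_ker, this]
    · intro hx
      simp only [LinearMap.mem_ker, ContinuousLinearMap.coe_coe, ContinuousLinearMap.sub_apply,
        ContinuousLinearMap.one_apply, sub_eq_zero] at hx
      exact ⟨x, hx.symm⟩
  have hclosed : IsClosed (LinearMap.range (P : H →ₗ[ℂ] H) : Set H) := by
    rw [hrange_ker]
    exact ContinuousLinearMap.isClosed_ker (1 - P)
  -- P fixes its range
  have hPfix : ∀ x ∈ LinearMap.range (P : H →ₗ[ℂ] H), P x = x := by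
    rintro x ⟨y, rfl⟩
    have := congrArg (fun T : H →L[ℂ] H => T y) hP
    simpa using this
  -- M ≤ range P, hence K ≤ range P
  have hMle : M ≤ LinearMap.range (P : H →ₗ[ℂ] H) := by
    rintro x ⟨y, hy, rfl⟩
    exact ⟨y, rfl⟩
  have hKle : K ≤ LinearMap.range (P : H →ₗ[ℂ] H) := by
    intro x hx
    have : (K : Set H) ⊆ (LinearMap.range (P : H →ₗ[ℂ] H) : Set H) :=
      closure_minimal hMle hclosed
    exact this hx
  intro g hg
  obtain ⟨m, hm, z, hz, hgmz⟩ := K.exists_add_mem_mem_orthogonal g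
  -- z is orthogonal to M
  have hzM : ∀ u ∈ M, inner (𝕜 := ℂ) u z = 0 := fun u hu =>
    hz u (Submodule.le_topologicalClosure M hu)
  -- z ∈ range P
  have hzP : z ∈ LinearMap.range (P : H →ₗ[ℂ] H) := by
    have hmP : m ∈ LinearMap.range (P : H →ₗ[ℂ] H) := hKle hm
    have : z = g - m := by rw [hgmz]; abel
    rw [this]
    exact Submodule.sub_mem _ hg hmP
  -- the adjoint trick: let v = P† z, then Q† v = 0 and P† v = v
  set v := (ContinuousLinearMap.adjoint P) z with hv
  have hQv : (ContinuousLinearMap.adjoint Q) v = 0 := by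
    have h : ∀ x : H, inner (𝕜 := ℂ) x ((ContinuousLinearMap.adjoint Q) v) = 0 := by
      intro x
      rw [ContinuousLinearMap.adjoint_inner_right, hv,
        ContinuousLinearMap.adjoint_inner_right]
      exact hzM (P (Q x)) ⟨Q x, ⟨x, rfl⟩, rfl⟩
    have := h ((ContinuousLinearMap.adjoint Q) v)
    rwa [inner_self_eq_zero] at this
  have hPv : (ContinuousLinearMap.adjoint P) v = v := by
    have : (ContinuousLinearMap.adjoint P).comp (ContinuousLinearMap.adjoint P)
        = ContinuousLinearMap.adjoint P := by
      rw [← ContinuousLinearMap.adjoint_comp, hP]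
    have := congrArg (fun T : H →L[ℂ] H => T z) this
    simpa [hv] using this
  -- v = 0
  have hv0 : v = 0 := by
    by_contra hne
    have hveq : v = (ContinuousLinearMap.adjoint P - ContinuousLinearMap.adjoint Q) v := by
      simp [ContinuousLinearMap.sub_apply, hPv, hQv]
    have hnorm : ‖ContinuousLinearMap.adjoint P - ContinuousLinearMap.adjoint Q‖ = ‖P - Q‖ := by
      rw [← map_sub (ContinuousLinearMap.adjoint : (H →L[ℂ] H) ≃ₗᵢ⋆[ℂ] (H →L[ℂ] H))]
      exact (ContinuousLinearMap.adjoint : (H →L[ℂ] H) ≃ₗᵢ⋆[ℂ] (H →L[ℂ] H)).norm_map _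
    have hle : ‖v‖ ≤ ‖P - Q‖ * ‖v‖ := by
      calc ‖v‖ = ‖(ContinuousLinearMap.adjoint P - ContinuousLinearMap.adjoint Q) v‖ := by
            rw [← hveq]
        _ ≤ ‖ContinuousLinearMap.adjoint P - ContinuousLinearMap.adjoint Q‖ * ‖v‖ :=
            ContinuousLinearMap.le_opNorm _ _
        _ = ‖P - Q‖ * ‖v‖ := by rw [hnorm]
    exact absurd hle (not_le.mpr (by nlinarith [norm_pos_iff.mpr hne]))
  -- hence z = 0
  have hz0 : z = 0 := by
    have : inner (𝕜 := ℂ) z z = 0 := by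
      have h1 : P z = z := hPfix z hzP
      calc inner (𝕜 := ℂ) z z = inner (𝕜 := ℂ) z (P z) := by rw [h1]
        _ = inner (𝕜 := ℂ) ((ContinuousLinearMap.adjoint P) z) z := by
            rw [ContinuousLinearMap.adjoint_inner_left]
        _ = 0 := by rw [← hv, hv0, inner_zero_left]
    rwa [inner_self_eq_zero] at this
  -- so g = m ∈ K = closure M
  have : g ∈ K := by rw [hgmz, hz0, add_zero]; exact hm
  rw [hMcoe]
  exact M.topologicalClosure_coe ▸ this
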